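/- Let λ ∈ (0,1), x ∈ X_λ, and x' ∈ X. If x' ∈ X^<(x) then s(x',x) ≤ α(λ), and if x' ∈ X^>(x) then s(x',x) ≥ α(λ). In particular, if in addition x' ∈ X_λ and f(x) ≠ f(x'), then s(x',x) = α(λ). -/
import Mathlib


open Set

noncomputable section

/-- The weighted-sum objective `λ·f₁ + (1−λ)·f₂`. -/
def wsum {X : Type*} (f₁ f₂ : X → ℝ) (lam : ℝ) (x : X) : ℝ :=
  lam * f₁ x + (1 - lam) * f₂ x

/-- `XlamSet f₁ f₂ λ` is the set `X_λ` of minimizers of the weighted-sum scalarisation. -/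
def XlamSet {X : Type*} (f₁ f₂ : X → ℝ) (lam : ℝ) : Set X :=
  {x | ∀ x' : X, wsum f₁ f₂ lam x ≤ wsum f₁ f₂ lam x'}

/-- `x` is supported efficient if it is optimal for some `λ ∈ (0,1)`. -/
def SuppEff {X : Type*} (f₁ f₂ : X → ℝ) (x : X) : Prop :=
  ∃ lam ∈ Set.Ioo (0 : ℝ) 1, x ∈ XlamSet f₁ f₂ lam

/-- The objSlope `s(x',x)` between the images of `x'` and `x`. -/
def objSlope {X : Type*} (f₁ f₂ : X → ℝ) (x' x : X) : ℝ :=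
  (f₂ x' - f₂ x) / (f₁ x' - f₁ x)

/-- `X^<(x)`: the solutions with strictly smaller first objective value. -/
def Xlt {X : Type*} (f₁ : X → ℝ) (x : X) : Set X := {x' | f₁ x' < f₁ x}

/-- `X^>(x)`: the solutions with strictly larger first objective value. -/
def Xgt {X : Type*} (f₁ : X → ℝ) (x : X) : Set X := {x' | f₁ x < f₁ x'}

/-- `α(λ) = −λ/(1−λ)` for `λ ∈ [0,1)`. -/
def alphaOf (lam : ℝ) : ℝ := -lam / (1 - lam)

/-- Let `λ ∈ (0,1)`, `x ∈ X_λ`, and `x' ∈ X`. If `x' ∈ X^<(x)` then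
`s(x',x) ≤ α(λ)`, and if `x' ∈ X^>(x)` then `s(x',x) ≥ α(λ)`. In particular, if in addition
`x' ∈ X_λ` and `f(x) ≠ f(x')`, then `s(x',x) = α(λ)`. -/
theorem slope_le_alpha_of_optimal
    {X : Type*} [Fintype X] [Nonempty X] (f₁ f₂ : X → ℝ) (lam : ℝ)
    (hlam : lam ∈ Set.Ioo (0 : ℝ) 1) (x x' : X) (hx : x ∈ XlamSet f₁ f₂ lam) :
    (x' ∈ Xlt f₁ x → objSlope f₁ f₂ x' x ≤ alphaOf lam) ∧
    (x' ∈ Xgt f₁ x → alphaOf lam ≤ objSlope f₁ f₂ x' x) ∧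
    (x' ∈ XlamSet f₁ f₂ lam → (f₁ x, f₂ x) ≠ (f₁ x', f₂ x') →
      objSlope f₁ f₂ x' x = alphaOf lam) := by
  obtain ⟨hl0, hl1⟩ := hlam
  have h1 : (0:ℝ) < 1 - lam := by linarith
  have hkey : lam * f₁ x + (1 - lam) * f₂ x ≤ lam * f₁ x' + (1 - lam) * f₂ x' := hx x'
  refine ⟨?_, ?_, ?_⟩
  · intro hlt
    have hd : f₁ x' - f₁ x < 0 := by simpa [Xlt, sub_neg] using hlt
    rw [objSlope, alphaOf, div_le_iff_of_neg hd, div_mul_eq_mul_div, div_le_iff₀ h1]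
    nlinarith
  · intro hgt
    have hd : 0 < f₁ x' - f₁ x := by simpa [Xgt, sub_pos] using hgt
    rw [objSlope, alphaOf, div_le_div_iff₀ h1 hd]
    nlinarith
  · intro hx' hne
    have hkey' : lam * f₁ x' + (1 - lam) * f₂ x' ≤ lam * f₁ x + (1 - lam) * f₂ x := hx' x
    have heq : lam * (f₁ x - f₁ x') = (1 - lam) * (f₂ x' - f₂ x) := by nlinarith
    by_cases h1eq : f₁ x = f₁ x'
    · exfalso
      have : f₂ x = f₂ x' := by nlinarith [h1eq]
      exact hne (by rw [h1eq, this])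
    · have hd : f₁ x' - f₁ x ≠ 0 := sub_ne_zero.mpr (Ne.symm h1eq)
      rw [objSlope, alphaOf]
      field_simp
      nlinarith [heq]
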